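/- The comultiplication is a morphism of right modules over the twisted multiplication up to the defining subspaces: for any g, h, k ∈ G and any c′, c″ ∈ 𝒞, the element Δ_{h,kg}(m_{hk,g}(c″ ⊗ c′)) − (1 ⊗ m_{k,g})(Δ_{h,k}(c″) ⊗ c′) lies in the subspace 𝒞_h ⊗ 𝒞 of 𝒞⊗𝒞; hence in HH₀(𝒞) the comultiplication is a morphism of right modules. -/

import Mathlib

open scoped TensorProduct

noncomputable section

variable {K : Type*} [Field K] {G : Type*} [Group G]
  {A : Type*} [Ring A] [Algebra K A] {ι : Type*} [Fintype ι]

/-- The subspace `𝒞_h = span{c₁c₂ − c₂·h(c₁) | c₁, c₂ ∈ 𝒞}`. -/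
def commSub (ρ : G → A ≃ₐ[K] A) (h : G) : Submodule K A :=
  Submodule.span K {x | ∃ c₁ c₂ : A, x = c₁ * c₂ - c₂ * ρ h c₁}

/-- The map `T_h(g)(c) = c_e⁻¹ c_{g,g⁻¹}⁻¹ g(c) c_{g,h} c_{gh,g⁻¹}`. -/
def Tmap (ρ : G → A ≃ₐ[K] A) (u : G → G → Aˣ) (ue : Aˣ) (g h : G) (x : A) : A :=
  (↑(ue⁻¹) : A) * (↑((u g g⁻¹)⁻¹) : A) * ρ g x * (↑(u g h) : A) * (↑(u (g * h) g⁻¹) : A)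

/-- The twisted multiplication `m_{g,h}(c′⊗c″) = Σᵢ ξ′ᵢ c′ g(ξ″ᵢ c″) c_{g,h}`. -/
def mMul (ρ : G → A ≃ₐ[K] A) (u : G → G → Aˣ) (ξ₁ ξ₂ : ι → A) (g h : G)
    (c' c'' : A) : A :=
  ∑ i, ξ₁ i * c' * ρ g (ξ₂ i * c'') * (↑(u g h) : A)

/-- The twisted comultiplication `Δ_{g,h}(c) = Σᵢ c c_{g,h}⁻¹ g(ξ′ᵢ) ⊗ ξ″ᵢ`. -/
def ΔCom (ρ : G → A ≃ₐ[K] A) (u : G → G → Aˣ) (ξ₁ ξ₂ : ι → A) (g h : G)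
    (c : A) : A ⊗[K] A :=
  ∑ i, (c * (↑((u g h)⁻¹) : A) * ρ g (ξ₁ i)) ⊗ₜ[K] ξ₂ i

/-- The subspace `𝒞_g ⊗ 𝒞` of `𝒞 ⊗ 𝒞`. -/
def leftTensor (ρ : G → A ≃ₐ[K] A) (g : G) : Submodule K (A ⊗[K] A) :=
  Submodule.span K {z | ∃ x ∈ commSub ρ g, ∃ y : A, z = x ⊗ₜ[K] y}

/-- The subspace `𝒞 ⊗ 𝒞_h` of `𝒞 ⊗ 𝒞`. -/
def rightTensor (ρ : G → A ≃ₐ[K] A) (h : G) : Submodule K (A ⊗[K] A) :=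
  Submodule.span K {z | ∃ x : A, ∃ y ∈ commSub ρ h, z = x ⊗ₜ[K] y}

lemma aux_recon₂ (θ : A →ₗ[K] K) (ξ₁ ξ₂ : ι → A)
    (hξ : ∀ a : A, a = ∑ i, θ (a * ξ₂ i) • ξ₁ i)
    (hξsym : (∑ i, ξ₁ i ⊗ₜ[K] ξ₂ i) = ∑ i, ξ₂ i ⊗ₜ[K] ξ₁ i)
    (a : A) : a = ∑ i, θ (a * ξ₁ i) • ξ₂ i := by
  let B : A →ₗ[K] A →ₗ[K] A := LinearMap.mk₂ K (fun x y => θ (a * x) • y)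
    (by intro x x' y; simp [mul_add, add_smul])
    (by intro c x y; rw [Algebra.mul_smul_comm, LinearMap.map_smul, smul_eq_mul, mul_smul])
    (by intro x y y'; simp)
    (by intro c x y; rw [smul_comm])
  have hB : ∀ x y : A, B x y = θ (a * x) • y := fun x y => rfl
  have := congrArg (TensorProduct.lift B) hξsym
  simp only [map_sum, TensorProduct.lift.tmul] at this
  simp only [hB] at this
  rw [this, ← hξ a]

lemma aux_sweep (θ : A →ₗ[K] K) (ξ₁ ξ₂ : ι → A)
    (hξ : ∀ a : A, a = ∑ i, θ (a * ξ₂ i) • ξ₁ i)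
    (hξ' : ∀ a : A, a = ∑ i, θ (a * ξ₁ i) • ξ₂ i)
    (F G : A →ₗ[K] A)
    (hFG : ∀ x y : A, θ (F x * y) = θ (G y * x)) :
    (∑ i, F (ξ₁ i) ⊗ₜ[K] ξ₂ i) = ∑ i, ξ₁ i ⊗ₜ[K] G (ξ₂ i) := by
  have step1 : ∀ i, F (ξ₁ i) ⊗ₜ[K] ξ₂ i
      = ∑ j, θ (G (ξ₂ j) * ξ₁ i) • (ξ₁ j ⊗ₜ[K] ξ₂ i) := by
    intro i
    conv_lhs => rw [hξ (F (ξ₁ i))]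
    rw [TensorProduct.sum_tmul]
    refine Finset.sum_congr rfl fun j _ => ?_
    rw [TensorProduct.smul_tmul', hFG]
  calc (∑ i, F (ξ₁ i) ⊗ₜ[K] ξ₂ i)
      = ∑ i, ∑ j, θ (G (ξ₂ j) * ξ₁ i) • (ξ₁ j ⊗ₜ[K] ξ₂ i) :=
        Finset.sum_congr rfl fun i _ => step1 i
    _ = ∑ j, ∑ i, θ (G (ξ₂ j) * ξ₁ i) • (ξ₁ j ⊗ₜ[K] ξ₂ i) := Finset.sum_comm
    _ = ∑ j, ξ₁ j ⊗ₜ[K] G (ξ₂ j) := by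
        refine Finset.sum_congr rfl fun j _ => ?_
        calc ∑ i, θ (G (ξ₂ j) * ξ₁ i) • (ξ₁ j ⊗ₜ[K] ξ₂ i)
            = ∑ i, ξ₁ j ⊗ₜ[K] (θ (G (ξ₂ j) * ξ₁ i) • ξ₂ i) :=
              Finset.sum_congr rfl fun i _ => (TensorProduct.tmul_smul _ _ _).symm
          _ = ξ₁ j ⊗ₜ[K] (∑ i, θ (G (ξ₂ j) * ξ₁ i) • ξ₂ i) :=
              (TensorProduct.tmul_sum _ _ _).symm
          _ = ξ₁ j ⊗ₜ[K] G (ξ₂ j) := by rw [← hξ' (G (ξ₂ j))]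

theorem ΔCom_right_module_morphism
    [Fintype G] (ρ : G → A ≃ₐ[K] A) (u : G → G → Aˣ) (ue : Aˣ)
    (hAd : ∀ (g h : G) (x : A),
      ρ g (ρ h x) = (↑(u g h) : A) * ρ (g * h) x * (↑((u g h)⁻¹) : A))
    (hAde : ∀ x : A, ρ (1 : G) x = (↑ue : A) * x * (↑(ue⁻¹) : A))
    (hcoc : ∀ g h k : G,
      (↑(u g h) : A) * (↑(u (g * h) k) : A) = ρ g (↑(u h k) : A) * (↑(u g (h * k)) : A))
    (hue1 : ∀ g : G, (↑(u g 1) : A) = ρ g (↑ue : A))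
    (hue2 : ∀ g : G, (↑(u 1 g) : A) = (↑ue : A))
    [FiniteDimensional K A] (θ : A →ₗ[K] K)
    (htr : ∀ a b : A, θ (a * b) = θ (b * a))
    (hnd : ∀ a : A, (∀ b : A, θ (a * b) = 0) → a = 0)
    (hGinv : ∀ (g : G) (a : A), θ (ρ g a) = θ a)
    (ξ₁ ξ₂ : ι → A)
    (hξ : ∀ a : A, a = ∑ i, θ (a * ξ₂ i) • ξ₁ i)
    (hξsym : (∑ i, ξ₁ i ⊗ₜ[K] ξ₂ i) = ∑ i, ξ₂ i ⊗ₜ[K] ξ₁ i)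
    (g h k : G) (c' c'' : A) :
    ΔCom ρ u ξ₁ ξ₂ h (k * g) (mMul ρ u ξ₁ ξ₂ (h * k) g c'' c') -
        ∑ i, (c'' * (↑((u h k)⁻¹) : A) * ρ h (ξ₁ i)) ⊗ₜ[K] mMul ρ u ξ₁ ξ₂ k g (ξ₂ i) c' ∈
      leftTensor ρ h := by
  classical
  have hξ' := aux_recon₂ θ ξ₁ ξ₂ hξ hξsym
  set σ : A ≃ₐ[K] A := (ρ h).symm with hσdef
  -- w i
  set w : ι → A := fun i => ρ k (ξ₂ i * c') * (↑(u k g) : A) with hwdef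
  set v : A := c'' * (↑((u h k)⁻¹) : A) with hvdef
  set y : ι → ι → A := fun i j => v * ρ h (w i * ξ₁ j) with hydef
  -- trace invariance under ρ h composed with products
  have hmove : ∀ x z : A, θ (ρ h x * z) = θ (x * σ z) := by
    intro x z
    conv_lhs => rw [← (ρ h).apply_symm_apply z]
    rw [← map_mul, hGinv]
  -- cocycle consequence
  have hcoc2 : (↑(u (h * k) g) : A) * (↑((u h (k * g))⁻¹) : A)
      = (↑((u h k)⁻¹) : A) * ρ h (↑(u k g) : A) := by
    calc (↑(u (h * k) g) : A) * (↑((u h (k * g))⁻¹) : A)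
        = (↑((u h k)⁻¹) : A) * ((↑(u h k) : A) * (↑(u (h * k) g) : A)) * (↑((u h (k * g))⁻¹) : A) := by
          rw [Units.inv_mul_cancel_left]
      _ = (↑((u h k)⁻¹) : A) * (ρ h (↑(u k g) : A) * (↑(u h (k * g)) : A)) * (↑((u h (k * g))⁻¹) : A) := by
          rw [hcoc h k g]
      _ = (↑((u h k)⁻¹) : A) * ρ h (↑(u k g) : A) := by
          rw [mul_assoc, Units.mul_inv_cancel_right]
  have hcoc2' : ∀ x : A, (↑(u (h * k) g) : A) * ((↑((u h (k * g))⁻¹) : A) * x)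
      = (↑((u h k)⁻¹) : A) * (ρ h (↑(u k g) : A) * x) := by
    intro x; rw [← mul_assoc, ← mul_assoc, hcoc2]
  -- key per-term identity for the first term
  have key : ∀ i j : ι,
      ξ₁ i * c'' * ρ (h * k) (ξ₂ i * c') * (↑(u (h * k) g) : A) * (↑((u h (k * g))⁻¹) : A)
        * ρ h (ξ₁ j) = ξ₁ i * y i j := by
    intro i j
    simp only [hydef, hvdef, hwdef]
    simp only [map_mul, hAd, mul_assoc, Units.inv_mul_cancel_left, Units.mul_inv_cancel_left,
      hcoc2']
  -- the sweep identities
  have twist : (∑ j, ρ h (ξ₁ j) ⊗ₜ[K] ξ₂ j) = ∑ j, ξ₁ j ⊗ₜ[K] σ (ξ₂ j) := by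
    refine aux_sweep θ ξ₁ ξ₂ hξ hξ' (ρ h).toLinearMap σ.toLinearMap ?_
    intro x z
    simp only [AlgEquiv.toLinearMap_apply]
    rw [hmove, htr]
  have h1 : ∀ i, (∑ j, ρ h (w i * ξ₁ j * ξ₁ i) ⊗ₜ[K] ξ₂ j)
      = ∑ j, ξ₁ j ⊗ₜ[K] (ξ₁ i * σ (ξ₂ j) * w i) := by
    intro i
    have hfg : ∀ x z : A,
        θ ((((ρ h).toLinearMap ∘ₗ (LinearMap.mulRight K (ξ₁ i)) ∘ₗ (LinearMap.mulLeft K (w i))) x) * z)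
          = θ ((((LinearMap.mulRight K (w i)) ∘ₗ (LinearMap.mulLeft K (ξ₁ i)) ∘ₗ σ.toLinearMap) z) * x) := by
      intro x z
      simp only [LinearMap.comp_apply, LinearMap.mulLeft_apply, LinearMap.mulRight_apply,
        AlgEquiv.toLinearMap_apply]
      rw [hmove, mul_assoc (w i * x), htr, ← mul_assoc]
    have := aux_sweep θ ξ₁ ξ₂ hξ hξ'
      ((ρ h).toLinearMap ∘ₗ (LinearMap.mulRight K (ξ₁ i)) ∘ₗ (LinearMap.mulLeft K (w i)))
      ((LinearMap.mulRight K (w i)) ∘ₗ (LinearMap.mulLeft K (ξ₁ i)) ∘ₗ σ.toLinearMap) hfg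
    simpa only [LinearMap.comp_apply, LinearMap.mulLeft_apply, LinearMap.mulRight_apply,
      AlgEquiv.toLinearMap_apply] using this
  have h2 : ∀ i, (∑ j, ρ h (ξ₁ j) ⊗ₜ[K] (ξ₁ i * ξ₂ j * w i))
      = ∑ j, ξ₁ j ⊗ₜ[K] (ξ₁ i * σ (ξ₂ j) * w i) := by
    intro i
    have := congrArg (TensorProduct.map (LinearMap.id (R := K) (M := A))
      ((LinearMap.mulRight K (w i)) ∘ₗ (LinearMap.mulLeft K (ξ₁ i)))) twist
    simpa only [map_sum, TensorProduct.map_tmul, LinearMap.id_coe, id_eq,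
      LinearMap.comp_apply, LinearMap.mulLeft_apply, LinearMap.mulRight_apply] using this
  have h4 : ∀ i, (∑ j, (v * ρ h (w i * ξ₁ j * ξ₁ i)) ⊗ₜ[K] ξ₂ j)
      = ∑ j, (v * ρ h (ξ₁ j)) ⊗ₜ[K] (ξ₁ i * ξ₂ j * w i) := by
    intro i
    have h3 := (h1 i).trans (h2 i).symm
    have := congrArg (TensorProduct.map (LinearMap.mulLeft K v)
      (LinearMap.id (R := K) (M := A))) h3.symm
    simpa only [map_sum, TensorProduct.map_tmul, LinearMap.id_coe, id_eq,
      LinearMap.mulLeft_apply] using this.symm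
  -- identification of the second term
  have hQ : (∑ i, ∑ j, (y i j * ρ h (ξ₁ i)) ⊗ₜ[K] ξ₂ j)
      = ∑ i, (c'' * (↑((u h k)⁻¹) : A) * ρ h (ξ₁ i)) ⊗ₜ[K] mMul ρ u ξ₁ ξ₂ k g (ξ₂ i) c' := by
    calc (∑ i, ∑ j, (y i j * ρ h (ξ₁ i)) ⊗ₜ[K] ξ₂ j)
        = ∑ i, ∑ j, (v * ρ h (w i * ξ₁ j * ξ₁ i)) ⊗ₜ[K] ξ₂ j := by
          refine Finset.sum_congr rfl fun i _ => Finset.sum_congr rfl fun j _ => ?_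
          simp only [hydef]
          rw [mul_assoc, ← map_mul]
      _ = ∑ i, ∑ j, (v * ρ h (ξ₁ j)) ⊗ₜ[K] (ξ₁ i * ξ₂ j * w i) :=
          Finset.sum_congr rfl fun i _ => h4 i
      _ = ∑ j, ∑ i, (v * ρ h (ξ₁ j)) ⊗ₜ[K] (ξ₁ i * ξ₂ j * w i) := Finset.sum_comm
      _ = ∑ i, (c'' * (↑((u h k)⁻¹) : A) * ρ h (ξ₁ i)) ⊗ₜ[K] mMul ρ u ξ₁ ξ₂ k g (ξ₂ i) c' := by
          refine Finset.sum_congr rfl fun j _ => ?_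
          rw [mMul, TensorProduct.tmul_sum]
          refine Finset.sum_congr rfl fun i _ => ?_
          simp only [hvdef, hwdef, mul_assoc]
  -- identification of the first term
  have hX : ΔCom ρ u ξ₁ ξ₂ h (k * g) (mMul ρ u ξ₁ ξ₂ (h * k) g c'' c')
      = ∑ i, ∑ j, (ξ₁ i * y i j) ⊗ₜ[K] ξ₂ j := by
    rw [ΔCom, mMul]
    calc (∑ j, ((∑ i, ξ₁ i * c'' * ρ (h * k) (ξ₂ i * c') * (↑(u (h * k) g) : A))
            * (↑((u h (k * g))⁻¹) : A) * ρ h (ξ₁ j)) ⊗ₜ[K] ξ₂ j)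
        = ∑ j, ∑ i, (ξ₁ i * c'' * ρ (h * k) (ξ₂ i * c') * (↑(u (h * k) g) : A)
            * (↑((u h (k * g))⁻¹) : A) * ρ h (ξ₁ j)) ⊗ₜ[K] ξ₂ j := by
          refine Finset.sum_congr rfl fun j _ => ?_
          rw [Finset.sum_mul, Finset.sum_mul, TensorProduct.sum_tmul]
      _ = ∑ j, ∑ i, (ξ₁ i * y i j) ⊗ₜ[K] ξ₂ j := by
          refine Finset.sum_congr rfl fun j _ => Finset.sum_congr rfl fun i _ => ?_
          rw [key i j]
      _ = ∑ i, ∑ j, (ξ₁ i * y i j) ⊗ₜ[K] ξ₂ j := Finset.sum_comm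
  rw [hX, ← hQ, ← Finset.sum_sub_distrib]
  refine Submodule.sum_mem _ fun i _ => ?_
  rw [← Finset.sum_sub_distrib]
  refine Submodule.sum_mem _ fun j _ => ?_
  rw [← TensorProduct.sub_tmul]
  exact Submodule.subset_span ⟨_, Submodule.subset_span ⟨ξ₁ i, y i j, rfl⟩, ξ₂ j, rfl⟩
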